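/- Define a 2-colouring of the complete symmetric digraph on ℕ⁺ as follows: for distinct m,n, let t = min{s : m ≢ n (mod 2^s)}; writing the pair so that m ≡ x (mod 2^t) with 0 ≤ x < 2^{t-1} and n ≡ 2^{t-1}+x (mod 2^t), colour (m,n) red and (n,m) blue. Then for every k ∈ ℕ and every infinite monochromatic directed path P, there exists i ∈ {0,...,2^k−1} such that all but finitely many vertices of P are congruent to i modulo 2^k. -/

import Mathlib

open scoped Classical

/-- The 2-colouring of the complete symmetric digraph on the positive integers:
for distinct `m, n`, let `t = min {s : m ≢ n (mod 2^s)}`; colour `(m,n)` red (0)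
if `m % 2^t < n % 2^t` (i.e. `m ≡ x (mod 2^t)` with `0 ≤ x < 2^(t-1)` and
`n ≡ 2^(t-1) + x (mod 2^t)`), and blue (1) otherwise. -/
noncomputable def binCol (m n : ℕ) : Fin 2 :=
  if h : ∃ s : ℕ, m % 2 ^ s ≠ n % 2 ^ s then
    (if m % 2 ^ Nat.find h < n % 2 ^ Nat.find h then 0 else 1)
  else 0

/-- Bit reversal of the low `k` bits. -/
def binRev : ℕ → ℕ → ℕ
  | 0, _ => 0
  | k + 1, a => (a % 2) * 2 ^ k + binRev k (a / 2)

lemma binRev_lt (k : ℕ) : ∀ a, binRev k a < 2 ^ k := by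
  induction k with
  | zero => intro a; simp [binRev]
  | succ k ih =>
    intro a
    have h1 : a % 2 ≤ 1 := Nat.le_of_lt_succ (Nat.mod_lt _ (by norm_num))
    have h2 := ih (a / 2)
    have : (2:ℕ) ^ (k+1) = 2 ^ k + 2 ^ k := by ring
    simp only [binRev, this]
    nlinarith

lemma binRev_mod (k : ℕ) : ∀ a, binRev k (a % 2 ^ k) = binRev k a := by
  induction k with
  | zero => intro a; simp [binRev]
  | succ k ih =>
    intro a
    have h1 : a % 2 ^ (k+1) % 2 = a % 2 :=
      Nat.mod_mod_of_dvd a (dvd_pow_self 2 (Nat.succ_ne_zero k))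
    have h2 : a % 2 ^ (k+1) / 2 = a / 2 % 2 ^ k := by
      have : (2:ℕ) ^ (k+1) = 2 * 2 ^ k := by ring
      rw [this, Nat.mod_mul_right_div_self]
    simp only [binRev, h1, h2, ih]

lemma mod_pow_succ' (a t : ℕ) :
    a % 2 ^ (t + 1) = 2 ^ t * (a / 2 ^ t % 2) + a % 2 ^ t := by
  have h1 : a % 2 ^ (t+1) % 2 ^ t = a % 2 ^ t := by
    exact Nat.mod_mod_of_dvd a (pow_dvd_pow 2 (Nat.le_succ t))
  have h2 : a % 2 ^ (t+1) / 2 ^ t = a / 2 ^ t % 2 := by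
    have : (2:ℕ) ^ (t+1) = 2 ^ t * 2 := by ring
    rw [this, Nat.mod_mul_right_div_self]
  conv_lhs => rw [← Nat.div_add_mod (a % 2 ^ (t+1)) (2 ^ t)]
  rw [h1, h2, Nat.mul_comm]

lemma mod_two_pow_succ (a k : ℕ) :
    a % 2 ^ (k + 1) = 2 * (a / 2 % 2 ^ k) + a % 2 := by
  have h1 : a % 2 ^ (k+1) % 2 = a % 2 :=
    Nat.mod_mod_of_dvd a (dvd_pow_self 2 (Nat.succ_ne_zero k))
  have h2 : a % 2 ^ (k+1) / 2 = a / 2 % 2 ^ k := by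
    have : (2:ℕ) ^ (k+1) = 2 * 2 ^ k := by ring
    rw [this, Nat.mod_mul_right_div_self]
  conv_lhs => rw [← Nat.div_add_mod (a % 2 ^ (k+1)) 2]
  rw [h1, h2]

/-- Key lemma: if `m, n` agree mod `2^t` and `m % 2^(t+1) < n % 2^(t+1)`, then
either `binRev k m < binRev k n`, or `m ≡ n (mod 2^k)`. -/
lemma binRev_key (k : ℕ) : ∀ m n t : ℕ, m % 2 ^ t = n % 2 ^ t →
    m % 2 ^ (t + 1) < n % 2 ^ (t + 1) →
    binRev k m < binRev k n ∨ m % 2 ^ k = n % 2 ^ k := by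
  induction k with
  | zero => intro m n t _ _; right; simp [Nat.mod_one]
  | succ k ih =>
    intro m n t heq hlt
    -- bit t of m is 0, of n is 1
    have hm := mod_pow_succ' m t
    have hn := mod_pow_succ' n t
    have hbm : m / 2 ^ t % 2 < n / 2 ^ t % 2 := by
      rcases Nat.lt_or_ge (m / 2 ^ t % 2) (n / 2 ^ t % 2) with h | h
      · exact h
      · exfalso; nlinarith [Nat.pos_of_ne_zero (fun h0 : (2:ℕ)^t = 0 => by
          have := pow_pos (by norm_num : (0:ℕ) < 2) t; omega)]
    cases t with
    | zero =>
      -- m even, n odd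
      left
      have hmm : m % 2 = 0 := by simpa using (by omega : m / 2 ^ 0 % 2 = 0)
      have hnn : n % 2 = 1 := by
        have : n / 2 ^ 0 % 2 = 1 := by omega
        simpa using this
      simp only [binRev, hmm, hnn]
      have := binRev_lt k (m / 2)
      omega
    | succ s =>
      have hpar : m % 2 = n % 2 := by
        have h2 : (2:ℕ) ∣ 2 ^ (s+1) := dvd_pow_self 2 (Nat.succ_ne_zero s)
        calc m % 2 = m % 2 ^ (s+1) % 2 := (Nat.mod_mod_of_dvd m h2).symm
          _ = n % 2 ^ (s+1) % 2 := by rw [heq]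
          _ = n % 2 := Nat.mod_mod_of_dvd n h2
      have heq' : m / 2 % 2 ^ s = n / 2 % 2 ^ s := by
        have hms := mod_two_pow_succ m s
        have hns := mod_two_pow_succ n s
        omega
      have hlt' : m / 2 % 2 ^ (s + 1) < n / 2 % 2 ^ (s + 1) := by
        have hms := mod_two_pow_succ m (s + 1)
        have hns := mod_two_pow_succ n (s + 1)
        omega
      rcases ih (m / 2) (n / 2) s heq' hlt' with h | h
      · left
        simp only [binRev, hpar]
        omega
      · right
        have hmk := mod_two_pow_succ m k
        have hnk := mod_two_pow_succ n k
        omega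

lemma exists_mod_ne {m n : ℕ} (hmn : m ≠ n) : ∃ s : ℕ, m % 2 ^ s ≠ n % 2 ^ s := by
  refine ⟨max m n, ?_⟩
  have hm : m < 2 ^ max m n :=
    lt_of_lt_of_le (Nat.lt_two_pow_self (n := m)) (Nat.pow_le_pow_right (by norm_num) (le_max_left _ _))
  have hn : n < 2 ^ max m n :=
    lt_of_lt_of_le (Nat.lt_two_pow_self (n := n)) (Nat.pow_le_pow_right (by norm_num) (le_max_right _ _))
  rw [Nat.mod_eq_of_lt hm, Nat.mod_eq_of_lt hn]
  exact hmn

lemma binCol_struct {m n : ℕ} (hmn : m ≠ n) :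
    (binCol m n = 0 → ∃ t, m % 2 ^ t = n % 2 ^ t ∧ m % 2 ^ (t+1) < n % 2 ^ (t+1)) ∧
    (binCol m n = 1 → ∃ t, n % 2 ^ t = m % 2 ^ t ∧ n % 2 ^ (t+1) < m % 2 ^ (t+1)) := by
  have h := exists_mod_ne hmn
  unfold binCol
  rw [dif_pos h]
  set T := Nat.find h with hT
  have hTspec : m % 2 ^ T ≠ n % 2 ^ T := Nat.find_spec h
  have hT1 : 1 ≤ T := by
    by_contra hc
    push_neg at hc
    interval_cases T
    · simp [Nat.mod_one] at hTspec
  have hmin : m % 2 ^ (T - 1) = n % 2 ^ (T - 1) := by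
    by_contra hc
    exact absurd hc (Nat.find_min h (by omega))
  have hTT : T - 1 + 1 = T := by omega
  constructor
  · intro h0
    split_ifs at h0 with hlt
    · exact ⟨T - 1, hmin, by rw [hTT]; exact hlt⟩
    · exact absurd h0 (by decide)
  · intro h1
    split_ifs at h1 with hlt
    · exact absurd h1 (by decide)
    · exact ⟨T - 1, hmin.symm, by rw [hTT]; omega⟩

/-- For every `k` and every infinite monochromatic directed path `P` (in the
colouring `binCol`), there is an `i < 2^k` such that all but finitely many
vertices of `P` are congruent to `i` modulo `2^k`. -/
theorem stmt1 (k : ℕ) (v : ℕ → ℕ) (hv : Function.Injective v)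
    (hmono : ∃ col : Fin 2, ∀ i : ℕ, binCol (v i) (v (i + 1)) = col) :
    ∃ i < 2 ^ k, ∃ N : ℕ, ∀ n ≥ N, v n % 2 ^ k = i := by
  obtain ⟨col, hcol⟩ := hmono
  set U : ℕ → ℕ := fun n => if col = 0 then 2 ^ k - 1 - binRev k (v n) else binRev k (v n)
    with hU
  have hne : ∀ n : ℕ, v n ≠ v (n + 1) := fun n h => by
    have := hv h; omega
  have hstep : ∀ n : ℕ, (U (n + 1) < U n ∧ v n % 2 ^ k ≠ v (n + 1) % 2 ^ k) ∨
      (U (n + 1) = U n ∧ v n % 2 ^ k = v (n + 1) % 2 ^ k) := by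
    intro n
    have hrevlt := binRev_lt k (v n)
    have hrevlt' := binRev_lt k (v (n + 1))
    have hrevmod : v n % 2 ^ k = v (n + 1) % 2 ^ k →
        binRev k (v n) = binRev k (v (n + 1)) := by
      intro h
      rw [← binRev_mod k (v n), ← binRev_mod k (v (n + 1)), h]
    have hc : col = 0 ∨ col = 1 := by fin_cases col <;> simp
    rcases hc with hc | hc
    · -- red: binRev increases
      have hU0 : ∀ m : ℕ, U m = 2 ^ k - 1 - binRev k (v m) := by
        intro m; simp [hU, hc]
      obtain ⟨t, heq, hlt⟩ := (binCol_struct (hne n)).1 (by rw [hcol n, hc])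
      rcases binRev_key k (v n) (v (n + 1)) t heq hlt with h | h
      · left
        constructor
        · rw [hU0, hU0]; omega
        · intro hmod
          have := hrevmod hmod; omega
      · right
        have := hrevmod h
        constructor
        · rw [hU0, hU0]; omega
        · exact h
    · -- blue: binRev decreases
      have hU0 : ∀ m : ℕ, U m = binRev k (v m) := by
        intro m; simp [hU, hc]
      obtain ⟨t, heq, hlt⟩ := (binCol_struct (hne n)).2 (by rw [hcol n, hc])
      rcases binRev_key k (v (n + 1)) (v n) t heq hlt with h | h
      · left
        constructor
        · rw [hU0, hU0]; omega
        · intro hmod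
          have := hrevmod hmod; omega
      · right
        have := hrevmod h.symm
        constructor
        · rw [hU0, hU0]; omega
        · exact h.symm
  have hanti : ∀ a b : ℕ, a ≤ b → U b ≤ U a := by
    intro a b hab
    induction b, hab using Nat.le_induction with
    | base => exact le_rfl
    | succ b hab ihb =>
      rcases hstep b with ⟨h1, _⟩ | ⟨h1, _⟩ <;> omega
  -- minimum of the range of U
  have hne' : (Set.range U).Nonempty := ⟨U 0, 0, rfl⟩
  obtain ⟨N, hN⟩ := Nat.sInf_mem hne'
  have hmin : ∀ n, sInf (Set.range U) ≤ U n := fun n =>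
    Nat.sInf_le ⟨n, rfl⟩
  have hconst : ∀ n ≥ N, v n % 2 ^ k = v N % 2 ^ k := by
    intro n hn
    induction n with
    | zero =>
      have : N = 0 := by omega
      rw [this]
    | succ n ihn =>
      rcases Nat.lt_or_ge N (n + 1) with h | h
      · have hUn : U n = sInf (Set.range U) := by
          have h1 := hanti N n (by omega)
          have h2 := hmin n
          omega
        have hUn1 : U (n + 1) = sInf (Set.range U) := by
          have h1 := hanti N (n + 1) (by omega)
          have h2 := hmin (n + 1)
          omega
        rcases hstep n with ⟨h1, _⟩ | ⟨_, h2⟩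
        · omega
        · rw [← h2]
          exact ihn (by omega)
      · have : N = n + 1 := by omega
        rw [this]
  exact ⟨v N % 2 ^ k, Nat.mod_lt _ (pow_pos (by norm_num) k), N, hconst⟩
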